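/- Let $p > 2$ and $n \geq 2$, and set $C_{n,p} = n^p / \sum_{i=1}^n i^{p-1}$. Then the inequality $\left(\sum_{k=1}^n a_k\right)^p \leq C_{n,p} \sum_{k=1}^n a_k \left(\sum_{i=1}^k a_i\right)^{p-1}$ FAILS for some non-negative, non-increasing sequence $(a_k)_{1 \leq k \leq n}$; specifically, there exists $\epsilon \in (0,1)$ such that it fails for $a = (1, 1, \ldots, 1, 1-\epsilon)$. -/

import Mathlib

open Real Finset Filter Set Topology

lemma two_rpow_gt (p : ℝ) (hp : 2 < p) : p < (2:ℝ) ^ (p - 1) := by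
  have h1 : (2:ℝ) ^ (p-1) = 2 * 2 ^ (p-2) := by
    rw [show p - 1 = 1 + (p-2) by ring, Real.rpow_add (by norm_num), Real.rpow_one]
  have h2 : (2:ℝ) ^ (p-2) = Real.exp ((p-2) * Real.log 2) := by
    rw [Real.rpow_def_of_pos (by norm_num : (0:ℝ) < 2)]
    ring_nf
  have hlog : (0.6931471803 : ℝ) < Real.log 2 := Real.log_two_gt_d9
  have h3 : (p-2) * Real.log 2 + 1 < Real.exp ((p-2)*Real.log 2) :=
    Real.add_one_lt_exp (ne_of_gt (mul_pos (by linarith) (by linarith)))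
  nlinarith [h3, (show (0:ℝ) < p - 2 by linarith)]

lemma key_ineq (p : ℝ) (hp : 2 < p) : ∀ n : ℕ, 2 ≤ n →
    p * ∑ i ∈ Finset.Icc 1 n, (i:ℝ) ^ (p-1) < (n:ℝ) ^ (p-1) * ((n:ℝ) + p - 1) := by
  intro n hn
  induction n, hn using Nat.le_induction with
  | base =>
    have : Finset.Icc 1 2 = {1, 2} := by decide
    rw [this]
    norm_num [Real.one_rpow]
    have := two_rpow_gt p hp
    nlinarith [Real.rpow_pos_of_pos (by norm_num : (0:ℝ) < 2) (p-1)]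
  | succ n hn ih =>
    have hn0 : (0:ℝ) < n := by positivity
    have hsum : ∑ i ∈ Finset.Icc 1 (n+1), (i:ℝ) ^ (p-1)
        = (∑ i ∈ Finset.Icc 1 n, (i:ℝ) ^ (p-1)) + ((n:ℝ)+1) ^ (p-1) := by
      rw [← Finset.Ico_add_one_right_eq_Icc, Finset.sum_Ico_succ_top (by omega), Finset.Ico_add_one_right_eq_Icc]
      push_cast
      ring
    have hbern : (1:ℝ) + (p-1) * (1/n) ≤ (1 + 1/n) ^ (p-1) :=
      one_add_mul_self_le_rpow_one_add
        (le_trans (by norm_num : (-1:ℝ) ≤ 0) (by positivity)) (by linarith)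
    have hne : (n:ℝ) * (1 + 1/n) = (n:ℝ) + 1 := by field_simp
    have hmul : ((n:ℝ)+1) ^ (p-1) = (n:ℝ)^(p-1) * (1 + 1/n) ^ (p-1) := by
      rw [← hne, Real.mul_rpow (le_of_lt hn0) (by positivity)]
    have hpow : (0:ℝ) < (n:ℝ)^(p-1) := Real.rpow_pos_of_pos hn0 _
    have hkey : (n:ℝ)^(p-1) * ((n:ℝ) + p - 1) ≤ (n:ℝ) * ((n:ℝ)+1)^(p-1) := by
      rw [hmul]
      have hne2 : (n:ℝ) * (1 + (p-1) * (1/n)) = (n:ℝ) + p - 1 := by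
        field_simp
        ring
      calc (n:ℝ)^(p-1) * ((n:ℝ) + p - 1)
          = (n:ℝ) * ((n:ℝ)^(p-1) * (1 + (p-1) * (1/n))) := by rw [← hne2]; ring
        _ ≤ (n:ℝ) * ((n:ℝ)^(p-1) * (1 + 1/n)^(p-1)) := by
            apply mul_le_mul_of_nonneg_left _ (le_of_lt hn0)
            exact mul_le_mul_of_nonneg_left hbern (le_of_lt hpow)
    rw [hsum]
    push_cast
    have hpow1 : (0:ℝ) < ((n:ℝ)+1)^(p-1) := Real.rpow_pos_of_pos (by linarith) _
    nlinarith [ih]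

theorem refined_power_rule_fails (p : ℝ) (hp : 2 < p) (n : ℕ) (hn : 2 ≤ n) :
    ∃ ε : ℝ, ε ∈ Set.Ioo (0 : ℝ) 1 ∧
      (let a : ℕ → ℝ := fun k => if k = n then 1 - ε else 1
       ((n : ℝ) ^ p / ∑ i ∈ Finset.Icc 1 n, (i : ℝ) ^ (p - 1)) *
           ∑ k ∈ Finset.Icc 1 n, a k * (∑ i ∈ Finset.Icc 1 k, a i) ^ (p - 1) <
         (∑ k ∈ Finset.Icc 1 n, a k) ^ p) := by
  have hN0 : (0:ℝ) < n := by positivity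
  have hN2 : (2:ℝ) ≤ n := by exact_mod_cast hn
  set N : ℝ := (n:ℝ) with hNdef
  set S : ℝ := ∑ i ∈ Finset.Icc 1 n, (i:ℝ) ^ (p-1) with hSdef
  have hSpos : 0 < S := by
    apply Finset.sum_pos
    · intro i hi
      simp only [Finset.mem_Icc] at hi
      have : (0:ℝ) < i := by exact_mod_cast hi.1
      positivity
    · exact ⟨1, by simp [Finset.mem_Icc]; omega⟩
  set C : ℝ := N ^ p / S with hCdef
  have hCS : C * S = N ^ p := div_mul_cancel₀ _ (ne_of_gt hSpos)
  have hkey : p * S < N ^ (p-1) * (N + p - 1) := key_ineq p hp n hn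
  set f : ℝ → ℝ := fun ε => (N-ε)^p - C*((S - N^(p-1)) + (1-ε)*(N-ε)^(p-1)) with hfdef
  have hf0 : f 0 = 0 := by
    simp only [hfdef]
    have h : (S - N^(p-1)) + (1-(0:ℝ))*(N-(0:ℝ))^(p-1) = S := by ring
    rw [h, sub_zero, hCS, sub_self]
  set D : ℝ := -(p * N^(p-1)) + C*(N^(p-1) + (p-1)*N^(p-2)) with hDdef
  have hNN : N ^ (p-1-1) = N ^ (p-2) := by rw [show p-1-1 = p-2 by ring]
  have hderiv : HasDerivAt f D 0 := by
    have h1 : HasDerivAt (fun ε : ℝ => N - ε) (-1) 0 := by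
      simpa using (hasDerivAt_id (0:ℝ)).const_sub N
    have h2 : HasDerivAt (fun ε : ℝ => (N-ε)^p) (p * N^(p-1) * (-1)) 0 := by
      have := (Real.hasDerivAt_rpow_const (x := N - 0) (p := p)
        (Or.inl (by simpa using ne_of_gt hN0))).comp 0 h1
      simpa [Function.comp_def] using this
    have h3 : HasDerivAt (fun ε : ℝ => (N-ε)^(p-1)) ((p-1) * N^(p-1-1) * (-1)) 0 := by
      have := (Real.hasDerivAt_rpow_const (x := N - 0) (p := p-1)
        (Or.inl (by simpa using ne_of_gt hN0))).comp 0 h1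
      simpa [Function.comp_def] using this
    have h4 : HasDerivAt (fun ε : ℝ => (1:ℝ) - ε) (-1) 0 := by
      simpa using (hasDerivAt_id (0:ℝ)).const_sub (1:ℝ)
    have h5 : HasDerivAt (fun ε : ℝ => (1-ε)*(N-ε)^(p-1))
        ((-1) * (N-0)^(p-1) + (1-0) * ((p-1) * N^(p-1-1) * (-1))) 0 := h4.mul h3
    have h6 : HasDerivAt (fun ε : ℝ => C*((S - N^(p-1)) + (1-ε)*(N-ε)^(p-1)))
        (C * (0 + ((-1) * (N-0)^(p-1) + (1-0) * ((p-1) * N^(p-1-1) * (-1))))) 0 :=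
      (((hasDerivAt_const (0:ℝ) (S - N^(p-1))).add h5)).const_mul C
    have h7 := h2.sub h6
    refine h7.congr_deriv ?_
    rw [hNN, hDdef]
    ring_nf
  have hD : 0 < D := by
    have e1 : N ^ (p-1) = N ^ (p-2) * N := by
      rw [show p-1 = (p-2)+1 by ring, Real.rpow_add_one (ne_of_gt hN0)]
    have e2 : N ^ p = N ^ (p-1) * N := by
      nth_rewrite 1 [show p = (p-1)+1 by ring]
      rw [Real.rpow_add_one (ne_of_gt hN0)]
    have hNp2 : 0 < N ^ (p-2) := Real.rpow_pos_of_pos hN0 _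
    have hD2 : D = N^(p-2) * (C*(N+p-1) - p*N) := by
      rw [hDdef, e1]; ring
    rw [hD2]
    apply mul_pos hNp2
    rw [sub_pos, hCdef, div_mul_eq_mul_div, lt_div_iff₀ hSpos]
    calc p * N * S = (p * S) * N := by ring
      _ < (N ^ (p-1) * (N + p - 1)) * N := mul_lt_mul_of_pos_right hkey hN0
      _ = N ^ p * (N + p - 1) := by rw [e2]; ring
  have hslope : Tendsto (slope f 0) (𝓝[≠] (0:ℝ)) (𝓝 D) := hasDerivAt_iff_tendsto_slope.mp hderiv
  have hslope' : Tendsto (slope f 0) (𝓝[>] (0:ℝ)) (𝓝 D) :=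
    hslope.mono_left (nhdsWithin_mono 0 (fun x hx => ne_of_gt hx))
  have hev : ∀ᶠ ε in 𝓝[>] (0:ℝ), 0 < slope f 0 ε :=
    hslope'.eventually (eventually_gt_nhds hD)
  have hev2 : ∀ᶠ ε in 𝓝[>] (0:ℝ), ε ∈ Set.Ioo (0:ℝ) 1 :=
    Ioo_mem_nhdsGT_of_mem (by constructor <;> norm_num)
  obtain ⟨ε, hs, hmem⟩ := (hev.and hev2).exists
  have hεpos : 0 < ε := hmem.1
  have hfε : 0 < f ε := by
    have h7 : slope f 0 ε = f ε / ε := by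
      rw [slope_def_field, hf0]; ring_nf
    rw [h7] at hs
    have := (lt_div_iff₀ hεpos).mp hs
    linarith
  refine ⟨ε, hmem, ?_⟩
  intro a
  have ha : ∀ k, a k = if k = n then 1 - ε else 1 := fun k => rfl
  have hAn : a n = 1 - ε := by rw [ha, if_pos rfl]
  have hAlt : ∀ i : ℕ, i < n → a i = 1 := by
    intro i h
    rw [ha, if_neg (by omega : ¬ i = n)]
  have hmemn : n ∈ Finset.Icc 1 n := Finset.mem_Icc.mpr ⟨by omega, le_refl n⟩
  have hinner_n : ∑ i ∈ Finset.Icc 1 n, a i = N - ε := by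
    rw [← Finset.sum_erase_add _ _ hmemn, Finset.Icc_erase_right]
    rw [Finset.sum_congr rfl (fun i hi => hAlt i (Finset.mem_Ico.mp hi).2),
      Finset.sum_const, Nat.card_Ico, nsmul_eq_mul, mul_one, hAn]
    have : ((n - 1 : ℕ) : ℝ) = N - 1 := by
      push_cast [Nat.cast_sub (by omega : 1 ≤ n)]
      ring
    rw [this]; ring
  have hinner_k : ∀ k ∈ Finset.Ico 1 n, (∑ i ∈ Finset.Icc 1 k, a i) = (k:ℝ) := by
    intro k hk
    have hk' := Finset.mem_Ico.mp hk
    rw [Finset.sum_congr rfl (fun i hi => hAlt i (by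
      have := (Finset.mem_Icc.mp hi).2; omega)), Finset.sum_const, Nat.card_Icc,
      nsmul_eq_mul, mul_one]
    have : k + 1 - 1 = k := by omega
    rw [this]
  have hS' : ∑ k ∈ Finset.Ico 1 n, (k:ℝ)^(p-1) = S - N^(p-1) := by
    have h8 : S = ∑ k ∈ Finset.Ico 1 n, (k:ℝ)^(p-1) + N^(p-1) := by
      rw [hSdef, ← Finset.Ico_add_one_right_eq_Icc, Finset.sum_Ico_succ_top (by omega), hNdef]
    rw [h8]; ring
  have hT : ∑ k ∈ Finset.Icc 1 n, a k * (∑ i ∈ Finset.Icc 1 k, a i)^(p-1)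
      = (S - N^(p-1)) + (1-ε)*(N-ε)^(p-1) := by
    rw [← Finset.sum_erase_add _ _ hmemn, Finset.Icc_erase_right]
    rw [Finset.sum_congr rfl (fun k hk => by
      rw [hinner_k k hk, hAlt k (Finset.mem_Ico.mp hk).2, one_mul]),
      hS', hAn, hinner_n]
  rw [hT, hinner_n]
  have hfe : f ε = (N-ε)^p - C*((S - N^(p-1)) + (1-ε)*(N-ε)^(p-1)) := rfl
  rw [hfe] at hfε
  linarith
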